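/- For every natural number n ≥ 1, real numbers a_1, ..., a_n not all zero, x > 0, and α > cos(π/(n+1)), we have the strict inequality ∑_{j=0}^{n-1} ( ∑_{k=0}^{j} (x^k / k!) · a_{n-j+k} )² < e^{2xα} · ∑_{j=1}^{n} a_j². -/

import Mathlib

open Real Finset

/-- Fan–Taussky–Todd quadratic form bound: for `v` with `v (n+1) = 0`,
`∑_{j=1}^n v_j v_{j+1} ≤ cos(π/(n+1)) ∑_{j=1}^n v_j²`. -/
lemma ftt_quadratic (n : ℕ) (hn : 1 ≤ n) (v : ℕ → ℝ) (hv : v (n + 1) = 0) :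
    ∑ j ∈ Finset.Icc 1 n, v j * v (j + 1) ≤
      Real.cos (π / (n + 1)) * ∑ j ∈ Finset.Icc 1 n, (v j) ^ 2 := by
  set θ : ℝ := π / (n + 1) with hθ
  have hn1 : (0 : ℝ) < (n : ℝ) + 1 := by positivity
  have hθpos : 0 < θ := div_pos Real.pi_pos hn1
  have hπeq : ((n : ℝ) + 1) * θ = π := by
    rw [hθ]; field_simp
  set S : ℕ → ℝ := fun k => Real.sin (k * θ) with hS
  have hSpos : ∀ k : ℕ, 1 ≤ k → k ≤ n → 0 < S k := by
    intro k hk1 hk2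
    apply Real.sin_pos_of_pos_of_lt_pi
    · have : (0 : ℝ) < (k : ℝ) := by exact_mod_cast hk1
      exact mul_pos this hθpos
    · have hlt : (k : ℝ) < (n : ℝ) + 1 := by
        have : (k : ℝ) ≤ (n : ℝ) := by exact_mod_cast hk2
        linarith
      calc (k : ℝ) * θ < ((n : ℝ) + 1) * θ := by
            exact mul_lt_mul_of_pos_right hlt hθpos
        _ = π := hπeq
  have hS0 : S 0 = 0 := by simp [hS]
  have hSn1 : S (n + 1) = 0 := by
    have : ((n + 1 : ℕ) : ℝ) * θ = π := by push_cast; exact hπeq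
    simp only [hS]
    rw [this, Real.sin_pi]
  have hrec : ∀ j : ℕ, 1 ≤ j → S (j + 1) + S (j - 1) = 2 * Real.cos θ * S j := by
    intro j hj
    have h1 : ((j - 1 : ℕ) : ℝ) = (j : ℝ) - 1 := by
      have := Nat.cast_sub (R := ℝ) hj
      simpa using this
    simp only [hS, Nat.cast_add, Nat.cast_one, h1]
    have e1 : ((j : ℝ) + 1) * θ = (j : ℝ) * θ + θ := by ring
    have e2 : ((j : ℝ) - 1) * θ = (j : ℝ) * θ - θ := by ring
    rw [e1, e2, Real.sin_add, Real.sin_sub]; ring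
  -- termwise inequality
  have hterm : ∀ j ∈ Finset.Icc 1 n, 2 * (v j * v (j + 1)) ≤
      S (j + 1) / S j * (v j) ^ 2 + S j / S (j + 1) * (v (j + 1)) ^ 2 := by
    intro j hj
    simp only [Finset.mem_Icc] at hj
    rcases eq_or_lt_of_le hj.2 with h | h
    · rw [h]
      simp [hv, hSn1]
    · have hp := hSpos (j + 1) (by omega) (by omega)
      have hq := hSpos j hj.1 hj.2
      have h2 : S (j + 1) / S j * (v j) ^ 2 + S j / S (j + 1) * (v (j + 1)) ^ 2
          - 2 * (v j * v (j + 1))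
          = (S (j + 1) * v j - S j * v (j + 1)) ^ 2 / (S j * S (j + 1)) := by
        field_simp
        ring
      have h3 : 0 ≤ (S (j + 1) * v j - S j * v (j + 1)) ^ 2 / (S j * S (j + 1)) := by
        positivity
      linarith [h2 ▸ h3]
  have hsum := Finset.sum_le_sum hterm
  rw [Finset.sum_add_distrib] at hsum
  -- reindex the second sum
  have hshift : ∑ j ∈ Finset.Icc 1 n, S j / S (j + 1) * (v (j + 1)) ^ 2
      = ∑ j ∈ Finset.Icc 1 n, S (j - 1) / S j * (v j) ^ 2 := by
    have e1 : ∑ j ∈ Finset.Icc 1 n, S j / S (j + 1) * (v (j + 1)) ^ 2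
        = ∑ j ∈ Finset.Icc 2 (n + 1), S (j - 1) / S j * (v j) ^ 2 := by
      apply Finset.sum_nbij' (i := fun j => j + 1) (j := fun j => j - 1)
      · intro a haa; simp only [Finset.mem_Icc] at *; omega
      · intro a haa; simp only [Finset.mem_Icc] at *; omega
      · intro a haa; omega
      · intro a haa; simp only [Finset.mem_Icc] at haa; omega
      · intro a haa
        have : a + 1 - 1 = a := by omega
        rw [this]
    rw [e1]
    -- Icc 2 (n+1) sum equals Icc 1 n sum since the extreme terms vanish
    have h1 : ∑ j ∈ Finset.Icc 2 (n + 1), S (j - 1) / S j * (v j) ^ 2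
        = ∑ j ∈ Finset.Icc 2 n, S (j - 1) / S j * (v j) ^ 2
          + S ((n + 1) - 1) / S (n + 1) * (v (n + 1)) ^ 2 := by
      rw [← Finset.sum_Icc_succ_top (by omega : 2 ≤ n + 1)]
    have hins : Finset.Icc 1 n = insert 1 (Finset.Icc 2 n) := by
      ext z; simp only [Finset.mem_Icc, Finset.mem_insert]; omega
    have h2 : ∑ j ∈ Finset.Icc 1 n, S (j - 1) / S j * (v j) ^ 2
        = S (1 - 1) / S 1 * (v 1) ^ 2 + ∑ j ∈ Finset.Icc 2 n, S (j - 1) / S j * (v j) ^ 2 := by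
      rw [hins, Finset.sum_insert (by simp)]
    rw [h1, h2, hv, hS0]
    simp
  rw [hshift] at hsum
  rw [← Finset.sum_add_distrib] at hsum
  have hfinal : ∑ j ∈ Finset.Icc 1 n,
      (S (j + 1) / S j * (v j) ^ 2 + S (j - 1) / S j * (v j) ^ 2)
      = ∑ j ∈ Finset.Icc 1 n, 2 * Real.cos θ * (v j) ^ 2 := by
    apply Finset.sum_congr rfl
    intro j hj
    simp only [Finset.mem_Icc] at hj
    have hq := hSpos j hj.1 hj.2
    have := hrec j hj.1
    field_simp
    nlinarith [this]
  rw [hfinal] at hsum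
  have heq2 : ∑ j ∈ Finset.Icc 1 n, 2 * Real.cos θ * (v j) ^ 2
      = 2 * (Real.cos θ * ∑ j ∈ Finset.Icc 1 n, (v j) ^ 2) := by
    rw [Finset.mul_sum, Finset.mul_sum]
    exact Finset.sum_congr rfl fun j _ => by ring
  rw [heq2] at hsum
  have hL : ∑ j ∈ Finset.Icc 1 n, 2 * (v j * v (j + 1))
      = 2 * ∑ j ∈ Finset.Icc 1 n, v j * v (j + 1) := by
    rw [Finset.mul_sum]
  rw [hL] at hsum
  linarith

theorem gen_ftt_strict (n : ℕ) (hn : 1 ≤ n) (a : ℕ → ℝ)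
    (ha : ∃ j ∈ Finset.Icc 1 n, a j ≠ 0) (x : ℝ) (hx : 0 < x)
    (α : ℝ) (hα : Real.cos (π / (n + 1)) < α) :
    ∑ j ∈ Finset.range n, (∑ k ∈ Finset.range (j + 1),
        x ^ k / (Nat.factorial k : ℝ) * a (n - j + k)) ^ 2 <
      Real.exp (2 * x * α) * ∑ j ∈ Finset.Icc 1 n, a j ^ 2 := by
  set c : ℝ := Real.cos (π / (n + 1)) with hc
  set u : ℕ → ℝ → ℝ := fun j t => ∑ k ∈ Finset.range (n + 1 - j),
      t ^ k / (Nat.factorial k : ℝ) * a (j + k) with hu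
  have hun1 : ∀ t : ℝ, u (n + 1) t = 0 := by
    intro t; simp [hu]
  have hderiv : ∀ j, 1 ≤ j → j ≤ n → ∀ t : ℝ, HasDerivAt (u j) (u (j + 1) t) t := by
    intro j hj1 hj2 t
    have hm : n + 1 - j = (n - j) + 1 := by omega
    have hd : HasDerivAt (fun t : ℝ => ∑ k ∈ Finset.range (n + 1 - j),
        t ^ k / (Nat.factorial k : ℝ) * a (j + k))
        (∑ k ∈ Finset.range (n + 1 - j),
          ((k : ℝ) * t ^ (k - 1) / (Nat.factorial k : ℝ)) * a (j + k)) t := by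
      apply HasDerivAt.fun_sum
      intro k _
      exact ((hasDerivAt_pow k t).div_const _).mul_const _
    have heq : ∑ k ∈ Finset.range (n + 1 - j),
        ((k : ℝ) * t ^ (k - 1) / (Nat.factorial k : ℝ)) * a (j + k) = u (j + 1) t := by
      rw [hm, Finset.sum_range_succ']
      simp only [Nat.cast_zero, zero_mul, zero_div, zero_mul, add_zero]
      have hm2 : n + 1 - (j + 1) = n - j := by omega
      rw [hu]
      simp only [hm2]
      apply Finset.sum_congr rfl
      intro k _
      have hfac : ((Nat.factorial (k + 1) : ℝ)) = ((k : ℝ) + 1) * (Nat.factorial k : ℝ) := by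
        rw [Nat.factorial_succ]; push_cast; ring
      have hidx : j + (k + 1) = j + 1 + k := by omega
      have hpow : t ^ (k + 1 - 1) = t ^ k := by norm_num
      rw [hfac, hidx, hpow]
      have hk1 : ((k : ℝ) + 1) ≠ 0 := by positivity
      have hkf : (Nat.factorial k : ℝ) ≠ 0 := by
        exact_mod_cast Nat.factorial_ne_zero k
      push_cast
      field_simp
    rw [← heq]
    exact hd
  set F : ℝ → ℝ := fun t => ∑ j ∈ Finset.Icc 1 n, (u j t) ^ 2 with hF
  set F' : ℝ → ℝ := fun t => ∑ j ∈ Finset.Icc 1 n, 2 * u j t * u (j + 1) t with hF'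
  have hFd : ∀ t : ℝ, HasDerivAt F (F' t) t := by
    intro t
    apply HasDerivAt.fun_sum
    intro j hj
    simp only [Finset.mem_Icc] at hj
    have h1 := (hderiv j hj.1 hj.2 t).fun_pow 2
    simpa using h1
  have hF'le : ∀ t : ℝ, F' t ≤ 2 * c * F t := by
    intro t
    have hq := ftt_quadratic n hn (fun j => u j t) (hun1 t)
    simp only [hF', hF]
    calc ∑ j ∈ Finset.Icc 1 n, 2 * u j t * u (j + 1) t
        = 2 * ∑ j ∈ Finset.Icc 1 n, u j t * u (j + 1) t := by
          rw [Finset.mul_sum]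
          exact Finset.sum_congr rfl fun j _ => by ring
      _ ≤ 2 * (c * ∑ j ∈ Finset.Icc 1 n, (u j t) ^ 2) := by
          apply mul_le_mul_of_nonneg_left _ (by norm_num)
          exact hq
      _ = 2 * c * ∑ j ∈ Finset.Icc 1 n, (u j t) ^ 2 := by ring
  set G : ℝ → ℝ := fun t => Real.exp (-(2 * c) * t) * F t with hG
  have hGd : ∀ t : ℝ, HasDerivAt G
      (Real.exp (-(2 * c) * t) * (-(2 * c)) * F t + Real.exp (-(2 * c) * t) * F' t) t := by
    intro t
    have he : HasDerivAt (fun t : ℝ => Real.exp (-(2 * c) * t))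
        (Real.exp (-(2 * c) * t) * (-(2 * c))) t := by
      have := ((hasDerivAt_id t).const_mul (-(2 * c))).exp
      simpa using this
    exact he.mul (hFd t)
  have hGanti : Antitone G := by
    apply antitone_of_deriv_nonpos
    · intro t; exact (hGd t).differentiableAt
    · intro t
      rw [(hGd t).deriv]
      have h1 : 0 < Real.exp (-(2 * c) * t) := Real.exp_pos _
      have h2 := hF'le t
      nlinarith [h1, h2]
  have hGle : G x ≤ G 0 := hGanti hx.le
  have hF0 : F 0 = ∑ j ∈ Finset.Icc 1 n, a j ^ 2 := by
    simp only [hF]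
    apply Finset.sum_congr rfl
    intro j hj
    simp only [Finset.mem_Icc] at hj
    congr 1
    simp only [hu]
    rw [Finset.sum_eq_single 0]
    · simp
    · intro k _ hk
      rw [zero_pow hk]
      simp
    · intro h0
      exfalso
      apply h0
      simp only [Finset.mem_range]
      omega
  have hF0pos : 0 < F 0 := by
    rw [hF0]
    obtain ⟨j, hj, hja⟩ := ha
    apply Finset.sum_pos'
    · intro i _; positivity
    · exact ⟨j, hj, lt_of_le_of_ne (sq_nonneg _) (Ne.symm (pow_ne_zero 2 hja))⟩
  have hFx : F x ≤ Real.exp (2 * c * x) * F 0 := by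
    have hGx : Real.exp (-(2 * c) * x) * F x ≤ F 0 := by
      have := hGle
      simp only [hG] at this
      simpa using this
    have hep : 0 < Real.exp (-(2 * c) * x) := Real.exp_pos _
    have := mul_le_mul_of_nonneg_left hGx (Real.exp_pos (2 * c * x)).le
    calc F x = Real.exp (2 * c * x) * (Real.exp (-(2 * c) * x) * F x) := by
          rw [← mul_assoc, ← Real.exp_add]
          ring_nf
          simp
      _ ≤ Real.exp (2 * c * x) * F 0 := this
  have hLHS : ∑ j ∈ Finset.range n, (∑ k ∈ Finset.range (j + 1),
      x ^ k / (Nat.factorial k : ℝ) * a (n - j + k)) ^ 2 = F x := by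
    simp only [hF]
    apply Finset.sum_nbij' (i := fun j => n - j) (j := fun j => n - j)
    · intro j hj; simp only [Finset.mem_range, Finset.mem_Icc] at *; omega
    · intro j hj; simp only [Finset.mem_range, Finset.mem_Icc] at *; omega
    · intro j hj; simp only [Finset.mem_range] at hj; omega
    · intro j hj; simp only [Finset.mem_Icc] at hj; omega
    · intro j hj
      simp only [Finset.mem_range] at hj
      congr 1
      simp only [hu]
      have : n + 1 - (n - j) = j + 1 := by omega
      rw [this]
  rw [hLHS, ← hF0]
  calc F x ≤ Real.exp (2 * c * x) * F 0 := hFx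
    _ < Real.exp (2 * x * α) * F 0 := by
        apply mul_lt_mul_of_pos_right _ hF0pos
        apply Real.exp_lt_exp.mpr
        nlinarith [hα, hx]
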